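/- (Kato's intertwining property.) Let E be a complex Banach space, P : [0,1] → B(E) a continuously differentiable family of idempotents (P(s)² = P(s) for all s), and let U_A : [0,1] → B(E) be differentiable with U_A(0) = 1 and U_A'(s) = [P'(s), P(s)] U_A(s) for all s ∈ [0,1]. Then U_A(s) P(0) = P(s) U_A(s) for every s ∈ [0,1]. -/
import Mathlib


open Set

/-- Algebraic identity: if `p` is idempotent and `p'*p + p*p' = p'`, then
`[[p',p],p] = p'`. -/
lemma stmt4_aux {R : Type*} [Ring R] (p p' : R) (hid : p * p = p)
    (hd : p' * p + p * p' = p') :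
    (p' * p - p * p') * p - p * (p' * p - p * p') = p' := by
  have h0 : p * p' * p = 0 := by
    have h := congrArg (fun x => p * x) hd
    simp only [mul_add, ← mul_assoc, hid] at h
    exact add_eq_right.mp h
  have e1 : (p' * p - p * p') * p - p * (p' * p - p * p')
      = p' * (p * p) - p * p' * p - p * p' * p + (p * p) * p' := by noncomm_ring
  rw [e1, hid, h0]
  simpa using hd

/-- **Kato's intertwining property.** Let `E` be a complex Banach space,
`P : [0,1] → B(E)` a continuously differentiable family of idempotents
(`P(s)² = P(s)`, with derivative `P'` continuous on `[0,1]`), and let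
`U_A : [0,1] → B(E)` be differentiable with `U_A(0) = 1` and
`U_A'(s) = [P'(s), P(s)] U_A(s)` for all `s ∈ [0,1]`.
Then `U_A(s) P(0) = P(s) U_A(s)` for every `s ∈ [0,1]`. -/
theorem stmt_4 {E : Type*} [NormedAddCommGroup E] [NormedSpace ℂ E] [CompleteSpace E]
    (P P' UA : ℝ → E →L[ℂ] E)
    (hP_idem : ∀ s ∈ Icc (0:ℝ) 1, P s * P s = P s)
    (hP_deriv : ∀ s ∈ Icc (0:ℝ) 1, HasDerivWithinAt P (P' s) (Icc (0:ℝ) 1) s)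
    (hP'_cont : ContinuousOn P' (Icc (0:ℝ) 1))
    (hUA0 : UA 0 = 1)
    (hUA_deriv : ∀ s ∈ Icc (0:ℝ) 1,
      HasDerivWithinAt UA ((P' s * P s - P s * P' s) * UA s) (Icc (0:ℝ) 1) s) :
    ∀ s ∈ Icc (0:ℝ) 1, UA s * P 0 = P s * UA s := by
  have h0 : (0:ℝ) ∈ Icc (0:ℝ) 1 := by constructor <;> norm_num
  set A : ℝ → E →L[ℂ] E := fun s => P' s * P s - P s * P' s with hA
  -- derivative of the idempotent identity: P'P + PP' = P'
  have hPP' : ∀ s ∈ Icc (0:ℝ) 1, P' s * P s + P s * P' s = P' s := by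
    intro s hs
    have hsq : HasDerivWithinAt (fun t => P t * P t)
        (P' s * P s + P s * P' s) (Icc (0:ℝ) 1) s := (hP_deriv s hs).mul (hP_deriv s hs)
    have hcongr : HasDerivWithinAt P (P' s * P s + P s * P' s) (Icc (0:ℝ) 1) s :=
      hsq.congr (fun t ht => (hP_idem t ht).symm) (hP_idem s hs).symm
    have hu : UniqueDiffWithinAt ℝ (Icc (0:ℝ) 1) s := (uniqueDiffOn_Icc one_pos) s hs
    have := hcongr.derivWithin hu
    rw [(hP_deriv s hs).derivWithin hu] at this
    exact this.symm
  have hkey : ∀ s ∈ Icc (0:ℝ) 1, A s * P s - P s * A s = P' s := fun s hs =>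
    stmt4_aux (P s) (P' s) (hP_idem s hs) (hPP' s hs)
  -- the function F = UA • P 0 - P • UA
  set F : ℝ → E →L[ℂ] E := fun s => UA s * P 0 - P s * UA s with hF
  -- F satisfies F' = A F
  have hF_deriv : ∀ s ∈ Icc (0:ℝ) 1,
      HasDerivWithinAt F (A s * F s) (Icc (0:ℝ) 1) s := by
    intro s hs
    have h1 : HasDerivWithinAt (fun t => UA t * P 0)
        ((A s * UA s) * P 0) (Icc (0:ℝ) 1) s := (hUA_deriv s hs).mul_const _
    have h2 : HasDerivWithinAt (fun t => P t * UA t)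
        (P' s * UA s + P s * (A s * UA s)) (Icc (0:ℝ) 1) s :=
      (hP_deriv s hs).mul (hUA_deriv s hs)
    have h3 := h1.sub h2
    have heq : (A s * UA s) * P 0 - (P' s * UA s + P s * (A s * UA s))
        = A s * F s := by
      rw [hF, ← hkey s hs]
      noncomm_ring
    rw [heq] at h3
    exact h3
  -- F is continuous on [0,1]
  have hF_cont : ContinuousOn F (Icc (0:ℝ) 1) :=
    fun s hs => ((hF_deriv s hs).continuousWithinAt)
  -- bound ‖A s‖ on the compact interval
  have hP_cont : ContinuousOn P (Icc (0:ℝ) 1) :=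
    fun s hs => (hP_deriv s hs).continuousWithinAt
  have hA_cont : ContinuousOn A (Icc (0:ℝ) 1) :=
    ((hP'_cont.mul hP_cont).sub (hP_cont.mul hP'_cont))
  obtain ⟨C, hC⟩ := (isCompact_Icc).exists_bound_of_continuousOn hA_cont
  have hC0 : ∀ s ∈ Icc (0:ℝ) 1, ‖A s‖ ≤ max C 0 :=
    fun s hs => le_trans (hC s hs) (le_max_left _ _)
  -- initial condition
  have hF0 : F 0 = 0 := by
    simp [hF, hUA0]
  -- Gronwall
  have hgron := norm_le_gronwallBound_of_norm_deriv_right_le (f := F)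
    (f' := fun s => A s * F s) (δ := 0) (K := max C 0) (ε := 0) (a := 0) (b := 1)
    hF_cont
    (fun s hs => by
      have hs' : s ∈ Icc (0:ℝ) 1 := ⟨hs.1, le_of_lt hs.2⟩
      exact (hF_deriv s hs').mono_of_mem_nhdsWithin (Icc_mem_nhdsGE_of_mem hs))
    (by simp [hF0])
    (fun s hs => by
      have hs' : s ∈ Icc (0:ℝ) 1 := ⟨hs.1, le_of_lt hs.2⟩
      calc ‖A s * F s‖ ≤ ‖A s‖ * ‖F s‖ := norm_mul_le _ _
        _ ≤ max C 0 * ‖F s‖ := by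
            exact mul_le_mul_of_nonneg_right (hC0 s hs') (norm_nonneg _)
        _ = max C 0 * ‖F s‖ + 0 := by ring)
  intro s hs
  have := hgron s hs
  rw [gronwallBound_ε0, zero_mul] at this
  have hFs : F s = 0 := norm_le_zero_iff.mp this
  have : UA s * P 0 - P s * UA s = 0 := hFs
  exact sub_eq_zero.mp this
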